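/- In a graph embedding, if an edge e is incident with exactly one face f and the cycle of f visits the two θ-orbits of e in interleaved order (cycle x₁, y₁, P₁, x₂, y₂, P₂ where {x₁,y₁} and {x₂,y₂} are the θ-orbits of e and x₂ = σ(x₁), y₂ = σ(y₁)), and every vertex incident with e has flags not all contained in e, then deleting e decreases the genus by exactly 1. -/

import Mathlib

set_option linter.unusedSectionVars false

def FPF {F : Type*} (π : Equiv.Perm F) : Prop := π * π = 1 ∧ ∀ x, π x ≠ x

def orbSet {F : Type*} (S : Set (Equiv.Perm F)) (x : F) : Set F :=
  MulAction.orbit (Subgroup.closure S) x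

noncomputable def orbCount {F : Type*} (S : Set (Equiv.Perm F)) : ℕ :=
  Nat.card (MulAction.orbitRel.Quotient (Subgroup.closure S) F)

noncomputable def genus {F : Type*} (θ σ' φ' : Equiv.Perm F) : ℤ :=
  (orbCount {θ, σ'} : ℤ) - orbCount {σ', φ'} - orbCount {θ, φ'} + 2 * orbCount {θ, σ', φ'}

def IsGraphEmb {F : Type*} (θ σ' φ' : Equiv.Perm F) : Prop :=
  FPF θ ∧ FPF σ' ∧ FPF φ' ∧ ∀ x : F, Nat.card (orbSet {θ, σ'} x) = 4

def IsEdgeDeletion {F : Type*} (σ' φ' : Equiv.Perm F) (e : Set F)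
    (θ₀ σ₀ φ₀ : Equiv.Perm {f : F // f ∉ e}) (θ : Equiv.Perm F) : Prop :=
  (∀ a : {f : F // f ∉ e}, (θ₀ a : F) = θ a ∧ (σ₀ a : F) = σ' a) ∧
  (∀ a : {f : F // f ∉ e}, ∃ m : ℕ,
     ((φ' * σ') ^ m) (φ' a) ∉ e ∧ (∀ j < m, ((φ' * σ') ^ j) (φ' a) ∈ e) ∧
     (φ₀ a : F) = ((φ' * σ') ^ m) (φ' a))

namespace Aux18

open Equiv Function

variable {F : Type*}

lemma mem_orbSet_iff {S : Set (Perm F)} {y z : F} :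
    y ∈ orbSet S z ↔ ∃ g ∈ Subgroup.closure S, g z = y := by
  constructor
  · rintro ⟨⟨g, hg⟩, rfl⟩; exact ⟨g, hg, rfl⟩
  · rintro ⟨g, hg, rfl⟩; exact ⟨⟨g, hg⟩, rfl⟩

lemma orbSet_refl {S : Set (Perm F)} (y : F) : y ∈ orbSet S y :=
  MulAction.mem_orbit_self y

lemma orbSet_symm {S : Set (Perm F)} {y z : F} (h : y ∈ orbSet S z) : z ∈ orbSet S y := by
  rcases mem_orbSet_iff.1 h with ⟨g, hg, rfl⟩
  exact mem_orbSet_iff.2 ⟨g⁻¹, inv_mem hg, by simp⟩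

lemma orbSet_trans {S : Set (Perm F)} {y z w : F} (h1 : y ∈ orbSet S z) (h2 : z ∈ orbSet S w) :
    y ∈ orbSet S w := by
  rcases mem_orbSet_iff.1 h1 with ⟨g, hg, rfl⟩
  rcases mem_orbSet_iff.1 h2 with ⟨g', hg', rfl⟩
  exact mem_orbSet_iff.2 ⟨g * g', mul_mem hg hg', rfl⟩

lemma orbSet_gen {S : Set (Perm F)} {s : Perm F} (hs : s ∈ S) (y : F) : s y ∈ orbSet S y :=
  mem_orbSet_iff.2 ⟨s, Subgroup.subset_closure hs, rfl⟩

lemma orbSet_apply_mem {S : Set (Perm F)} {g : Perm F} (hg : g ∈ Subgroup.closure S) (y : F) :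
    g y ∈ orbSet S y := mem_orbSet_iff.2 ⟨g, hg, rfl⟩

lemma orbSet_mono {S T : Set (Perm F)} (hST : S ⊆ T) {y z : F} (h : y ∈ orbSet S z) :
    y ∈ orbSet T z := by
  rcases mem_orbSet_iff.1 h with ⟨g, hg, rfl⟩
  exact mem_orbSet_iff.2 ⟨g, Subgroup.closure_mono hST hg, rfl⟩

lemma rel_closure {S : Set (Perm F)} {r : F → F → Prop} (hr : Equivalence r)
    (hS : ∀ s ∈ S, ∀ y, r (s y) y) :
    ∀ g ∈ Subgroup.closure S, ∀ y, r (g y) y := by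
  intro g hg
  let H : Subgroup (Perm F) :=
    { carrier := {g : Perm F | ∀ y, r (g y) y}
      one_mem' := fun y => hr.refl y
      mul_mem' := by
        intro a b ha hb y
        exact hr.trans (ha (b y)) (hb y)
      inv_mem' := by
        intro a ha y
        have := ha (a⁻¹ y)
        rw [show a (a⁻¹ y) = y from a.apply_symm_apply y] at this
        exact hr.symm this }
  exact (Subgroup.closure_le H).2 (fun s hs => hS s hs) hg

lemma orbSet_subset_of_invariant [Finite F] {S : Set (Perm F)} {A : Set F}
    (hA : ∀ s ∈ S, ∀ y ∈ A, s y ∈ A) {x : F} (hx : x ∈ A) :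
    orbSet S x ⊆ A := by
  have hiff : ∀ s ∈ S, ∀ y, (s y ∈ A ↔ y ∈ A) := by
    intro s hs
    have hmaps : Set.MapsTo s A A := fun y hy => hA s hs y hy
    have hfin : A.Finite := Set.toFinite A
    have hbij : Set.BijOn s A A := hfin.injOn_iff_bijOn_of_mapsTo hmaps |>.1 (s.injective.injOn)
    intro y
    constructor
    · intro hy
      by_contra hyA
      obtain ⟨z, hz, hzy⟩ := hbij.surjOn hy
      exact hyA ((s.injective hzy) ▸ hz)
    · exact hA s hs y
  intro y hy
  rcases mem_orbSet_iff.1 hy with ⟨g, hg, rfl⟩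
  have := rel_closure (r := fun a b => a ∈ A ↔ b ∈ A)
    ⟨fun _ => Iff.rfl, Iff.symm, Iff.trans⟩ (fun s hs y => hiff s hs y) g hg x
  exact this.2 hx

section count
variable [Fintype F] {e : Set F}

noncomputable def Phi (S : Set (Perm F)) (S₀ : Set (Perm {f : F // f ∉ e}))
    (down : ∀ a b : {f : F // f ∉ e}, a ∈ orbSet S₀ b → (a : F) ∈ orbSet S (b : F)) :
    MulAction.orbitRel.Quotient (Subgroup.closure S₀) {f : F // f ∉ e} →
      MulAction.orbitRel.Quotient (Subgroup.closure S) F :=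
  Quotient.map' Subtype.val (by
    intro a b hab
    have : a ∈ orbSet S₀ b := MulAction.orbitRel_apply.1 hab
    exact MulAction.orbitRel_apply.2 (down a b this))

lemma Phi_mk {S : Set (Perm F)} {S₀ : Set (Perm {f : F // f ∉ e})} {down} (a : {f : F // f ∉ e}) :
    Phi S S₀ down (Quotient.mk'' a) = Quotient.mk'' (a : F) := rfl

lemma Phi_inj {S : Set (Perm F)} {S₀ : Set (Perm {f : F // f ∉ e})} {down}
    (up : ∀ a b : {f : F // f ∉ e}, (a : F) ∈ orbSet S (b : F) → a ∈ orbSet S₀ b) :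
    Function.Injective (Phi S S₀ down) := by
  intro q q'
  induction q using Quotient.inductionOn'
  induction q' using Quotient.inductionOn'
  rename_i a b
  intro hab
  rw [Phi_mk, Phi_mk] at hab
  have := MulAction.orbitRel_apply.1 (Quotient.eq''.1 hab)
  exact Quotient.sound' (MulAction.orbitRel_apply.2 (up _ _ this))

lemma countA {S : Set (Perm F)} {S₀ : Set (Perm {f : F // f ∉ e})}
    (down : ∀ a b : {f : F // f ∉ e}, a ∈ orbSet S₀ b → (a : F) ∈ orbSet S (b : F))
    (up : ∀ a b : {f : F // f ∉ e}, (a : F) ∈ orbSet S (b : F) → a ∈ orbSet S₀ b)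
    (onto : ∀ y : F, ∃ a : {f : F // f ∉ e}, y ∈ orbSet S (a : F)) :
    orbCount S = orbCount S₀ := by
  have hsurj : Function.Surjective (Phi S S₀ down) := by
    intro q
    induction q using Quotient.inductionOn'
    rename_i y
    obtain ⟨a, ha⟩ := onto y
    exact ⟨Quotient.mk'' a, (Quotient.sound' (MulAction.orbitRel_apply.2 ha)).symm⟩
  exact (Nat.card_eq_of_bijective _ ⟨Phi_inj (down := down) up, hsurj⟩).symm

lemma countB {S : Set (Perm F)} {S₀ : Set (Perm {f : F // f ∉ e})} {x : F} (hx : x ∈ e)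
    (down : ∀ a b : {f : F // f ∉ e}, a ∈ orbSet S₀ b → (a : F) ∈ orbSet S (b : F))
    (up : ∀ a b : {f : F // f ∉ e}, (a : F) ∈ orbSet S (b : F) → a ∈ orbSet S₀ b)
    (hee : ∀ y ∈ e, y ∈ orbSet S x)
    (hsep : ∀ y ∈ e, ∀ a : {f : F // f ∉ e}, ¬ ((a : F) ∈ orbSet S y)) :
    orbCount S = orbCount S₀ + 1 := by
  classical
  let Ψ : (MulAction.orbitRel.Quotient (Subgroup.closure S₀) {f : F // f ∉ e}) ⊕ PUnit.{1} →
      MulAction.orbitRel.Quotient (Subgroup.closure S) F :=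
    Sum.elim (Phi S S₀ down) (fun _ => Quotient.mk'' x)
  have hinj : Function.Injective Ψ := by
    rintro (q | u) (q' | u') hqq
    · simp only [Ψ, Sum.elim_inl] at hqq
      exact congrArg Sum.inl (Phi_inj (down := down) up hqq)
    · exfalso
      induction q using Quotient.inductionOn'
      rename_i a
      simp only [Ψ, Sum.elim_inl, Sum.elim_inr, Phi_mk] at hqq
      have := MulAction.orbitRel_apply.1 (Quotient.eq''.1 hqq)
      exact hsep x hx a this
    · exfalso
      induction q' using Quotient.inductionOn'
      rename_i a
      simp only [Ψ, Sum.elim_inl, Sum.elim_inr, Phi_mk] at hqq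
      have := MulAction.orbitRel_apply.1 (Quotient.eq''.1 hqq.symm)
      exact hsep x hx a this
    · cases u; cases u'; rfl
  have hsurj : Function.Surjective Ψ := by
    intro q
    induction q using Quotient.inductionOn'
    rename_i y
    by_cases hy : y ∈ e
    · exact ⟨Sum.inr (PUnit.unit : PUnit.{1}), (Quotient.sound' (MulAction.orbitRel_apply.2 (hee y hy))).symm⟩
    · exact ⟨Sum.inl (Quotient.mk'' ⟨y, hy⟩), rfl⟩
  have hcard := Nat.card_eq_of_bijective _ ⟨hinj, hsurj⟩
  rw [Nat.card_sum] at hcard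
  simpa [orbCount] using hcard.symm

end count

lemma dih {α β : Perm F} (hα : α * α = 1) (hβ : β * β = 1) :
    ∀ g ∈ Subgroup.closure ({α, β} : Set (Perm F)),
      ∃ t : ℤ, g = (β * α) ^ t ∨ g = (β * α) ^ t * α := by
  have hαinv : α⁻¹ = α := inv_eq_of_mul_eq_one_right hα
  have hβinv : β⁻¹ = β := inv_eq_of_mul_eq_one_right hβ
  have h1 : α * (β * α) * α⁻¹ = (β * α)⁻¹ := by
    rw [hαinv, mul_inv_rev, hαinv, hβinv, mul_assoc, mul_assoc, hα, mul_one]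
  have hswap : ∀ t : ℤ, α * (β * α) ^ t = (β * α) ^ (-t) * α := by
    intro t
    have h2 : α * (β * α) ^ t * α⁻¹ = ((β * α)⁻¹) ^ t := by
      rw [← conj_zpow, h1]
    have h3 : ((β * α)⁻¹ : Perm F) ^ t = (β * α) ^ (-t) := (inv_zpow' _ t)
    calc α * (β * α) ^ t = (α * (β * α) ^ t * α⁻¹) * α := by
          rw [mul_assoc, hαinv, hα, mul_one]
      _ = (β * α) ^ (-t) * α := by rw [h2, h3]
  have c34a : ∀ s t : ℤ, (β * α) ^ s * α * ((β * α) ^ t) = (β * α) ^ (s - t) * α := by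
    intro s t
    rw [mul_assoc, hswap t, ← mul_assoc, ← zpow_add, ← sub_eq_add_neg]
  have c34b : ∀ s t : ℤ, (β * α) ^ s * α * ((β * α) ^ t * α) = (β * α) ^ (s - t) := by
    intro s t
    rw [← mul_assoc, c34a, mul_assoc, hα, mul_one]
  intro g hg
  induction hg using Subgroup.closure_induction with
  | mem s hs =>
    rcases hs with rfl | rfl
    · exact ⟨0, Or.inr (by group)⟩
    · exact ⟨1, Or.inr (by rw [zpow_one, mul_assoc, hα, mul_one])⟩
  | one => exact ⟨0, Or.inl (by group)⟩
  | mul g₁ g₂ hg₁ hg₂ ih₁ ih₂ =>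
    obtain ⟨s, hs | hs⟩ := ih₁ <;> obtain ⟨t, ht | ht⟩ := ih₂ <;> subst hs <;> subst ht
    · exact ⟨s + t, Or.inl (by rw [zpow_add])⟩
    · exact ⟨s + t, Or.inr (by rw [zpow_add, mul_assoc])⟩
    · exact ⟨s - t, Or.inr (by rw [← c34a s t, mul_assoc])⟩
    · exact ⟨s - t, Or.inl (by rw [← c34b s t, mul_assoc])⟩
  | inv g hg ih =>
    obtain ⟨t, ht | ht⟩ := ih <;> subst ht
    · exact ⟨-t, Or.inl (by group)⟩
    · refine ⟨t, Or.inr ?_⟩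
      rw [mul_inv_rev, hαinv, ← zpow_neg, hswap, neg_neg]

lemma zpow_apply_iterate [Fintype F] (g : Perm F) (t : ℤ) (y : F) :
    ∃ n : ℕ, (g ^ t) y = (⇑g)^[n] y := by
  refine ⟨(t % (orderOf g : ℤ)).toNat, ?_⟩
  have hpos : (0 : ℤ) < (orderOf g : ℤ) := by exact_mod_cast orderOf_pos g
  have hnn : 0 ≤ t % (orderOf g : ℤ) := Int.emod_nonneg t (by omega)
  have h : g ^ t = g ^ ((t % (orderOf g : ℤ)).toNat) := by
    rw [← zpow_natCast, Int.toNat_of_nonneg hnn, zpow_mod_orderOf]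
  rw [h]
  rfl

lemma FR {e : Set F} (fρ : F → F) (τ : Perm {f : F // f ∉ e})
    (hτ : ∀ a : {f : F // f ∉ e}, ∃ k, 0 < k ∧ ((τ a : F) = fρ^[k] (a : F)) ∧
      ∀ i, 0 < i → i < k → fρ^[i] (a : F) ∈ e) :
    ∀ n (a : {f : F // f ∉ e}), fρ^[n] (a : F) ∉ e →
      ∃ j, ((τ ^ j) a : F) = fρ^[n] (a : F) := by
  intro n
  induction n using Nat.strong_induction_on with
  | _ n ih =>
    intro a ha
    rcases Nat.eq_zero_or_pos n with rfl | hn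
    · exact ⟨0, rfl⟩
    · obtain ⟨k, hk, heq, hmem⟩ := hτ a
      have hkn : k ≤ n := by
        by_contra hlt
        exact ha (hmem n hn (by omega))
      have hiter : fρ^[n - k] ((τ a : F)) = fρ^[n] (a : F) := by
        rw [heq, ← Function.iterate_add_apply]
        congr 1
        omega
      have hne : fρ^[n - k] ((τ a : F)) ∉ e := by rw [hiter]; exact ha
      obtain ⟨j, hj⟩ := ih (n - k) (by omega) (τ a) hne
      refine ⟨j + 1, ?_⟩
      rw [pow_succ, Equiv.Perm.mul_apply, hj, hiter]

end Aux18

open Equiv Function Aux18 in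
set_option maxHeartbeats 1600000000 in
theorem stmt18 {F : Type*} [Fintype F]
    (θ σ' φ' : Equiv.Perm F) (h : IsGraphEmb θ σ' φ') (x : F)
    (e : Set F) (he : e = orbSet {θ, σ'} x)
    (honeface : Nat.card ((fun f => orbSet {θ, φ'} f) '' e) = 1)
    (hinterleaved : ∃ m : ℕ, 0 < m ∧ ((φ' * θ) ^ m) x = σ' x)
    (hverts : ∀ f ∈ e, ¬ orbSet {σ', φ'} f ⊆ e)
    (θ₀ σ₀ φ₀ : Equiv.Perm {f : F // f ∉ e})
    (hdel : IsEdgeDeletion σ' φ' e θ₀ σ₀ φ₀ θ) :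
    genus θ σ' φ' - genus θ₀ σ₀ φ₀ = 1 := by
  classical
  obtain ⟨⟨hθ2, hθf⟩, ⟨hσ2, hσf⟩, ⟨hφ2, hφf⟩, hcard⟩ := h
  obtain ⟨hdel1, hdel2⟩ := hdel
  have hθθ : ∀ y, θ (θ y) = y := fun y => by
    have := congrArg (fun g : Equiv.Perm F => g y) hθ2; simpa using this
  have hσσ : ∀ y, σ' (σ' y) = y := fun y => by
    have := congrArg (fun g : Equiv.Perm F => g y) hσ2; simpa using this
  have hφφ : ∀ y, φ' (φ' y) = y := fun y => by
    have := congrArg (fun g : Equiv.Perm F => g y) hφ2; simpa using this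
  have hxe : x ∈ e := he ▸ orbSet_refl x
  -- membership of generators in the sets
  have hθmemE : θ ∈ ({θ, σ'} : Set (Perm F)) := Set.mem_insert _ _
  have hσmemE : σ' ∈ ({θ, σ'} : Set (Perm F)) := Set.mem_insert_of_mem _ rfl
  have hθmemF : θ ∈ ({θ, φ'} : Set (Perm F)) := Set.mem_insert _ _
  have hφmemF : φ' ∈ ({θ, φ'} : Set (Perm F)) := Set.mem_insert_of_mem _ rfl
  have hσmemV : σ' ∈ ({σ', φ'} : Set (Perm F)) := Set.mem_insert _ _
  have hφmemV : φ' ∈ ({σ', φ'} : Set (Perm F)) := Set.mem_insert_of_mem _ rfl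
  -- e is invariant
  have heθ : ∀ y, y ∈ e ↔ θ y ∈ e := by
    intro y
    constructor
    · intro hy
      rw [he] at hy ⊢
      exact orbSet_trans (orbSet_gen hθmemE y) hy
    · intro hy
      rw [he] at hy ⊢
      have : θ (θ y) ∈ orbSet {θ, σ'} x := orbSet_trans (orbSet_gen hθmemE (θ y)) hy
      rwa [hθθ] at this
  have heσ : ∀ y, y ∈ e ↔ σ' y ∈ e := by
    intro y
    constructor
    · intro hy
      rw [he] at hy ⊢
      exact orbSet_trans (orbSet_gen hσmemE y) hy
    · intro hy
      rw [he] at hy ⊢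
      have : σ' (σ' y) ∈ orbSet {θ, σ'} x := orbSet_trans (orbSet_gen hσmemE (σ' y)) hy
      rwa [hσσ] at this
  -- distinctness
  have d1 : θ x ≠ x := hθf x
  have d2 : σ' x ≠ x := hσf x
  have hcard4 : (orbSet {θ, σ'} x).ncard = 4 := by
    rw [← Nat.card_coe_set_eq]; exact hcard x
  have d3 : θ x ≠ σ' x := by
    intro heq
    have hsub : orbSet {θ, σ'} x ⊆ ({x, θ x} : Set F) := by
      apply orbSet_subset_of_invariant
      · intro s hs y hy
        rcases hs with rfl | rfl
        · rcases hy with rfl | rfl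
          · exact Set.mem_insert_of_mem _ rfl
          · rw [hθθ]; exact Set.mem_insert _ _
        · rcases hy with rfl | rfl
          · rw [← heq]; exact Set.mem_insert_of_mem _ rfl
          · rw [heq, hσσ]; exact Set.mem_insert _ _
      · exact Set.mem_insert _ _
    have hle : (orbSet {θ, σ'} x).ncard ≤ 2 := by
      refine le_trans (Set.ncard_le_ncard hsub (Set.toFinite _)) ?_
      refine le_trans (Set.ncard_insert_le _ _) ?_
      simp
    omega
  have d4 : θ (σ' x) ≠ x := by
    intro hh
    have h' := congrArg θ hh
    rw [hθθ] at h'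
    exact d3 h'.symm
  have d5 : θ (σ' x) ≠ θ x := fun hh => d2 (θ.injective hh)
  have d6 : θ (σ' x) ≠ σ' x := hθf _
  -- commutation
  have hcomm : σ' (θ x) = θ (σ' x) := by
    by_contra hne
    have d7 : σ' (θ x) ≠ x := by
      intro hh
      have h' := congrArg σ' hh
      rw [hσσ] at h'
      exact d3 h'
    have d8 : σ' (θ x) ≠ θ x := hσf _
    have d9 : σ' (θ x) ≠ σ' x := fun hh => d1 (σ'.injective hh)
    have hsub : ({x, θ x, σ' x, θ (σ' x), σ' (θ x)} : Set F) ⊆ orbSet {θ, σ'} x := by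
      intro y hy
      rcases hy with rfl | rfl | rfl | rfl | rfl
      · exact orbSet_refl _
      · exact orbSet_gen hθmemE _
      · exact orbSet_gen hσmemE _
      · exact orbSet_trans (orbSet_gen hθmemE _) (orbSet_gen hσmemE _)
      · exact orbSet_trans (orbSet_gen hσmemE _) (orbSet_gen hθmemE _)
    have h5 : ({x, θ x, σ' x, θ (σ' x), σ' (θ x)} : Set F).ncard = 5 := by
      rw [Set.ncard_insert_of_notMem (by
        simp only [Set.mem_insert_iff, Set.mem_singleton_iff]
        push_neg
        exact ⟨Ne.symm d1, Ne.symm d2, Ne.symm d4, Ne.symm d7⟩)]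
      rw [Set.ncard_insert_of_notMem (by
        simp only [Set.mem_insert_iff, Set.mem_singleton_iff]
        push_neg
        exact ⟨d3, Ne.symm d5, Ne.symm d8⟩)]
      rw [Set.ncard_insert_of_notMem (by
        simp only [Set.mem_insert_iff, Set.mem_singleton_iff]
        push_neg
        exact ⟨Ne.symm d6, Ne.symm d9⟩)]
      rw [Set.ncard_insert_of_notMem (by
        simp only [Set.mem_singleton_iff]
        exact fun hh => hne hh.symm)]
      simp
    have := Set.ncard_le_ncard hsub (Set.toFinite _)
    omega
  -- e enumeration
  have heenum : e = ({x, θ x, σ' x, θ (σ' x)} : Set F) := by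
    rw [he]
    apply Set.Subset.antisymm
    · apply orbSet_subset_of_invariant
      · intro s hs y hy
        rcases hs with rfl | rfl
        · rcases hy with rfl | rfl | rfl | rfl
          · exact Set.mem_insert_of_mem _ (Set.mem_insert _ _)
          · rw [hθθ]; exact Set.mem_insert _ _
          · exact Set.mem_insert_of_mem _ (Set.mem_insert_of_mem _ (Set.mem_insert_of_mem _ rfl))
          · rw [hθθ]
            exact Set.mem_insert_of_mem _ (Set.mem_insert_of_mem _ (Set.mem_insert _ _))
        · rcases hy with rfl | rfl | rfl | rfl
          · exact Set.mem_insert_of_mem _ (Set.mem_insert_of_mem _ (Set.mem_insert _ _))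
          · rw [hcomm]
            exact Set.mem_insert_of_mem _ (Set.mem_insert_of_mem _ (Set.mem_insert_of_mem _ rfl))
          · rw [hσσ]; exact Set.mem_insert _ _
          · rw [← hcomm, hσσ]; exact Set.mem_insert_of_mem _ (Set.mem_insert _ _)
      · exact Set.mem_insert _ _
    · intro y hy
      rcases hy with rfl | rfl | rfl | rfl
      · exact orbSet_refl _
      · exact orbSet_gen hθmemE _
      · exact orbSet_gen hσmemE _
      · exact orbSet_trans (orbSet_gen hθmemE _) (orbSet_gen hσmemE _)
  -- ===== face machinery =====
  set ρ : Equiv.Perm F := φ' * θ with hρdef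
  have hρapp : ∀ y, ρ y = φ' (θ y) := fun y => rfl
  have hρθρ : ∀ y, ρ (θ (ρ y)) = θ y := by
    intro y
    rw [hρapp, hρapp, hθθ, hφφ]
  have hφρθ : ∀ y, φ' y = ρ (θ y) := by
    intro y
    rw [hρapp, hθθ]
  set pos : ℕ → F := fun k => (⇑ρ)^[k] x with hposdef
  have hpos0 : pos 0 = x := rfl
  have hpossucc : ∀ k, pos (k + 1) = ρ (pos k) := by
    intro k
    simp only [hposdef]
    rw [Function.iterate_succ_apply']
  have hposadd : ∀ k l, pos (k + l) = (⇑ρ)^[k] (pos l) := by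
    intro k l
    simp only [hposdef]
    rw [Function.iterate_add_apply]
  set N : ℕ := Function.minimalPeriod (⇑ρ) x with hNdef
  have hxper : x ∈ Function.periodicPts (⇑ρ) := by
    refine ⟨orderOf ρ, orderOf_pos ρ, ?_⟩
    show (⇑ρ)^[orderOf ρ] x = x
    have : (ρ ^ orderOf ρ) x = x := by rw [pow_orderOf_eq_one]; rfl
    exact this
  have hNpos : 0 < N := Function.minimalPeriod_pos_of_mem_periodicPts hxper
  have hposN : pos N = x := Function.iterate_minimalPeriod
  have hposmod : ∀ k, pos (k % N) = pos k := fun k => Function.iterate_mod_minimalPeriod_eq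
  have hposinj : ∀ {k l}, k < N → l < N → pos k = pos l → k = l := by
    intro k l hk hl hkl
    exact Function.iterate_injOn_Iio_minimalPeriod (by exact hk) (by exact hl) hkl
  obtain ⟨m, hm0, hmx⟩ := hinterleaved
  have hposm : pos m = σ' x := hmx
  set M : ℕ := m % N with hMdef
  have hposM : pos M = σ' x := by rw [hMdef, hposmod]; exact hposm
  have hMN : M < N := Nat.mod_lt _ hNpos
  have hM0 : M ≠ 0 := by
    intro hM
    rw [hM] at hposM
    exact d2 hposM.symm
  -- key reversal identity
  have idk : ∀ k y, (⇑ρ)^[k] (θ ((⇑ρ)^[k] y)) = θ y := by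
    intro k
    induction k with
    | zero => intro y; rfl
    | succ k ih =>
      intro y
      rw [Function.iterate_succ_apply, Function.iterate_succ_apply']
      rw [hρθρ]
      exact ih y
  -- iterates are injective
  have hitinj : ∀ k : ℕ, Function.Injective ((⇑ρ)^[k]) := fun k => ρ.injective.iterate k
  -- pos p can never be θ x
  have no2 : ∀ p, pos p ≠ θ x := by
    intro p hp
    rcases Nat.even_or_odd p with ⟨r, hr⟩ | ⟨r, hr⟩
    · -- p = r + r : θ fixes pos r
      apply hθf (pos r)
      apply hitinj r
      have e1 : (⇑ρ)^[r] (θ (pos r)) = θ x := idk r x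
      have e2 : (⇑ρ)^[r] (pos r) = pos p := by
        rw [← hposadd, hr]
      rw [e1, e2, hp]
    · -- p = 2r+1 : φ' fixes pos (r+1)
      apply hφf (pos (r + 1))
      rw [hφρθ]
      apply hitinj (r + 1)
      have e1 : (⇑ρ)^[r + 1] (ρ (θ (pos (r + 1)))) = ρ (pos p) := by
        have h1 : (⇑ρ)^[r + 1] (ρ (θ (pos (r + 1)))) = ρ ((⇑ρ)^[r + 1] (θ (pos (r + 1)))) := by
          rw [← Function.iterate_succ_apply, Function.iterate_succ_apply']
        rw [h1, idk (r + 1) x, hp]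
      have e2 : (⇑ρ)^[r + 1] (pos (r + 1)) = ρ (pos p) := by
        rw [← hposadd, ← hpossucc]
        congr 1
        omega
      rw [e1, e2]
  have no2' : ∀ p, pos p ≠ θ (σ' x) := by
    intro p hp
    apply no2 (p + M)
    have h1 : θ (pos p) = pos M := by rw [hp, hθθ, hposM]
    have h2 : (⇑ρ)^[p] (θ (pos p)) = θ x := idk p x
    rw [h1, ← hposadd] at h2
    exact h2
  -- e positions
  have e_pos : ∀ k, pos k ∈ e ↔ (k % N = 0 ∨ k % N = M) := by
    intro k
    constructor
    · intro hk
      rw [heenum] at hk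
      rcases hk with hk | hk | hk | hk
      · left
        have : pos (k % N) = pos 0 := by rw [hposmod, hk, hpos0]
        exact hposinj (Nat.mod_lt _ hNpos) hNpos this
      · exact absurd hk (no2 k)
      · right
        have : pos (k % N) = pos M := by rw [hposmod, hk, hposM]
        exact hposinj (Nat.mod_lt _ hNpos) hMN this
      · exact absurd hk (no2' k)
    · intro hk
      rcases hk with hk | hk
      · rw [← hposmod, hk, hpos0]; exact hxe
      · rw [← hposmod, hk, hposM, heenum]
        exact Set.mem_insert_of_mem _ (Set.mem_insert_of_mem _ (Set.mem_insert _ _))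
  -- ===== spliced face map =====
  set fρ : F → F := fun y => if y ∈ e then φ' (σ' y) else ρ y with hfρdef
  have hfρe : ∀ y ∈ e, fρ y = φ' (σ' y) := fun y hy => if_pos hy
  have hfρn : ∀ y, y ∉ e → fρ y = ρ y := fun y hy => if_neg hy
  set τf : Equiv.Perm {f : F // f ∉ e} := φ₀ * θ₀ with hτfdef
  have τf_spec : ∀ a : {f : F // f ∉ e}, ∃ k, 0 < k ∧ ((τf a : F) = fρ^[k] (a : F)) ∧
      ∀ i, 0 < i → i < k → fρ^[i] (a : F) ∈ e := by
    intro a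
    obtain ⟨m', hm'1, hm'2, hm'3⟩ := hdel2 (θ₀ a)
    have hθa : ((θ₀ a : F)) = θ (a : F) := (hdel1 a).1
    have hchain : ∀ j, j ≤ m' → fρ^[j + 1] (a : F) = ((φ' * σ') ^ j) (φ' ((θ₀ a : F))) := by
      intro j
      induction j with
      | zero =>
        intro _
        show fρ^[1] (a : F) = _
        rw [Function.iterate_one, hfρn _ a.2, hρapp, hθa]
        simp
      | succ j ih =>
        intro hj
        have hjm : j < m' := by omega
        have hin : ((φ' * σ') ^ j) (φ' ((θ₀ a : F))) ∈ e := hm'2 j hjm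
        have : fρ^[j + 1 + 1] (a : F) = fρ (fρ^[j + 1] (a : F)) := by
          rw [Function.iterate_succ_apply']
        rw [this, ih (by omega), hfρe _ hin, pow_succ', Equiv.Perm.mul_apply,
          Equiv.Perm.mul_apply]
    refine ⟨m' + 1, Nat.succ_pos _, ?_, ?_⟩
    · have h1 : τf a = φ₀ (θ₀ a) := rfl
      rw [h1, hm'3, hchain m' le_rfl]
    · intro i hi0 hik
      obtain ⟨j, rfl⟩ : ∃ j, i = j + 1 := ⟨i - 1, by omega⟩
      rw [hchain j (by omega)]
      exact hm'2 j (by omega)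
  have hθ₀memF : θ₀ ∈ ({θ₀, φ₀} : Set (Perm {f : F // f ∉ e})) := Set.mem_insert _ _
  have hφ₀memF : φ₀ ∈ ({θ₀, φ₀} : Set (Perm {f : F // f ∉ e})) := Set.mem_insert_of_mem _ rfl
  have hτfmem : τf ∈ Subgroup.closure ({θ₀, φ₀} : Set (Perm {f : F // f ∉ e})) :=
    mul_mem (Subgroup.subset_closure hφ₀memF) (Subgroup.subset_closure hθ₀memF)
  have conn : ∀ (z : F) (hz : z ∉ e) (n : ℕ) (hn : fρ^[n] z ∉ e),
      (⟨fρ^[n] z, hn⟩ : {f : F // f ∉ e}) ∈ orbSet {θ₀, φ₀} ⟨z, hz⟩ := by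
    intro z hz n hn
    obtain ⟨j, hj⟩ := FR fρ τf τf_spec n ⟨z, hz⟩ hn
    have heq : (τf ^ j) ⟨z, hz⟩ = ⟨fρ^[n] z, hn⟩ := Subtype.ext hj
    rw [← heq]
    exact orbSet_apply_mem (pow_mem hτfmem j) _
  have θlink : ∀ (y : F) (hy : y ∉ e) (hθy : θ y ∉ e),
      (⟨θ y, hθy⟩ : {f : F // f ∉ e}) ∈ orbSet {θ₀, φ₀} ⟨y, hy⟩ := by
    intro y hy hθy
    have heq : θ₀ ⟨y, hy⟩ = ⟨θ y, hθy⟩ := Subtype.ext ((hdel1 ⟨y, hy⟩).1)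
    rw [← heq]
    exact orbSet_gen hθ₀memF _
  -- one face containing e
  have hfaceeq : ∀ z ∈ e, orbSet {θ, φ'} z = orbSet {θ, φ'} x := by
    have h1 : ((fun f => orbSet {θ, φ'} f) '' e).ncard = 1 := by
      rw [← Nat.card_coe_set_eq]; exact honeface
    obtain ⟨o, ho⟩ := Set.ncard_eq_one.1 h1
    intro z hz
    have hzo : orbSet {θ, φ'} z = o := by
      have := Set.mem_image_of_mem (fun f => orbSet {θ, φ'} f) hz
      rw [ho] at this
      exact this
    have hxo : orbSet {θ, φ'} x = o := by
      have := Set.mem_image_of_mem (fun f => orbSet {θ, φ'} f) hxe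
      rw [ho] at this
      exact this
    rw [hzo, hxo]
  have efc : e ⊆ orbSet {θ, φ'} x := fun z hz => by
    rw [← hfaceeq z hz]; exact orbSet_refl z
  have facegenφ : ∀ w ∈ orbSet {θ, φ'} x, φ' w ∈ orbSet {θ, φ'} x := fun w hw =>
    orbSet_trans (orbSet_gen hφmemF w) hw
  have feNE : ∃ u, u ∈ orbSet {θ, φ'} x ∧ u ∉ e := by
    by_contra hcon
    push_neg at hcon
    have hsub : orbSet {σ', φ'} x ⊆ e := by
      apply orbSet_subset_of_invariant
      · intro s hs y hy
        rcases hs with rfl | rfl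
        · exact (heσ y).1 hy
        · exact hcon _ (facegenφ y (efc hy))
      · exact hxe
    exact hverts x hxe hsub
  have φface : ∀ a : {f : F // f ∉ e}, φ' (a : F) ∈ e → (φ₀ a : F) ∈ orbSet {θ, φ'} x := by
    intro a hfa
    obtain ⟨m', hm'1, hm'2, hm'3⟩ := hdel2 a
    have hchain : ∀ j, j ≤ m' → ((φ' * σ') ^ j) (φ' (a : F)) ∈ orbSet {θ, φ'} x := by
      intro j
      induction j with
      | zero =>
        intro _
        simpa using efc hfa
      | succ j ih =>
        intro hj
        have hjm : j < m' := by omega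
        have hin : ((φ' * σ') ^ j) (φ' (a : F)) ∈ e := hm'2 j hjm
        rw [pow_succ', Equiv.Perm.mul_apply, Equiv.Perm.mul_apply]
        exact facegenφ _ (efc ((heσ _).1 hin))
    rw [hm'3]
    exact hchain m' le_rfl
  -- ===== arcs =====
  have nonE : ∀ k, 1 ≤ k → k < N → k ≠ M → pos k ∉ e := by
    intro k h1 h2 h3 hk
    rw [e_pos k, Nat.mod_eq_of_lt h2] at hk
    omega
  have hfstep : ∀ k, pos k ∉ e → fρ (pos k) = pos (k + 1) := by
    intro k hk
    rw [hfρn _ hk, hpossucc]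
  have hchainiter : ∀ d k, (∀ i, i < d → pos (k + i) ∉ e) → fρ^[d] (pos k) = pos (k + d) := by
    intro d
    induction d with
    | zero => intro k _; simp
    | succ d ih =>
      intro k hall
      rw [Function.iterate_succ_apply', ih k (fun i hi => hall i (by omega)),
        hfstep _ (hall d (by omega))]
      congr 1
  have arcconn : ∀ k d (hall : ∀ i, i ≤ d → pos (k + i) ∉ e),
      (⟨pos (k + d), hall d le_rfl⟩ : {f : F // f ∉ e}) ∈
        orbSet {θ₀, φ₀} ⟨pos k, by have := hall 0 (Nat.zero_le d); rwa [Nat.add_zero] at this⟩ := by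
    intro k d hall
    have h0 : pos k ∉ e := by have := hall 0 (Nat.zero_le d); rwa [Nat.add_zero] at this
    have hiter : fρ^[d] (pos k) = pos (k + d) := hchainiter d k (fun i hi => hall i (by omega))
    have hd : fρ^[d] (pos k) ∉ e := by rw [hiter]; exact hall d le_rfl
    have := conn (pos k) h0 d hd
    have heq : (⟨fρ^[d] (pos k), hd⟩ : {f : F // f ∉ e}) = ⟨pos (k + d), hall d le_rfl⟩ :=
      Subtype.ext hiter
    rwa [heq] at this
  have arc1 : ∀ k l (h1 : 1 ≤ k) (hkl : k ≤ l) (hlM : l < M),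
      (⟨pos l, nonE l (by omega) (by omega) (by omega)⟩ : {f : F // f ∉ e}) ∈
        orbSet {θ₀, φ₀} ⟨pos k, nonE k (by omega) (by omega) (by omega)⟩ := by
    intro k l h1 hkl hlM
    have hall : ∀ i, i ≤ l - k → pos (k + i) ∉ e :=
      fun i hi => nonE (k + i) (by omega) (by omega) (by omega)
    have := arcconn k (l - k) hall
    have heq : (⟨pos (k + (l - k)), hall (l - k) le_rfl⟩ : {f : F // f ∉ e}) =
        ⟨pos l, nonE l (by omega) (by omega) (by omega)⟩ := by
      apply Subtype.ext
      show pos (k + (l - k)) = pos l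
      congr 1
      omega
    rwa [heq] at this
  have arc2 : ∀ k l (h1 : M + 1 ≤ k) (hkl : k ≤ l) (hlN : l < N),
      (⟨pos l, nonE l (by omega) (by omega) (by omega)⟩ : {f : F // f ∉ e}) ∈
        orbSet {θ₀, φ₀} ⟨pos k, nonE k (by omega) (by omega) (by omega)⟩ := by
    intro k l h1 hkl hlN
    have hall : ∀ i, i ≤ l - k → pos (k + i) ∉ e :=
      fun i hi => nonE (k + i) (by omega) (by omega) (by omega)
    have := arcconn k (l - k) hall
    have heq : (⟨pos (k + (l - k)), hall (l - k) le_rfl⟩ : {f : F // f ∉ e}) =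
        ⟨pos l, nonE l (by omega) (by omega) (by omega)⟩ := by
      apply Subtype.ext
      show pos (k + (l - k)) = pos l
      congr 1
      omega
    rwa [heq] at this
  have cross : ∀ (h2M : 2 ≤ M) (hM2N : M + 2 ≤ N),
      (⟨pos (N - 1), nonE _ (by omega) (by omega) (by omega)⟩ : {f : F // f ∉ e}) ∈
        orbSet {θ₀, φ₀} ⟨pos (M - 1), nonE _ (by omega) (by omega) (by omega)⟩ := by
    intro h2M hM2N
    have hM1 : pos (M - 1) ∉ e := nonE _ (by omega) (by omega) (by omega)
    have hN1 : pos (N - 1) ∉ e := nonE _ (by omega) (by omega) (by omega)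
    have hMe : pos M ∈ e := by
      rw [e_pos, Nat.mod_eq_of_lt hMN]
      right; rfl
    have hrx : ρ (θ x) = θ (pos (N - 1)) := by
      have h1 := hρθρ (pos (N - 1))
      have h2 : ρ (pos (N - 1)) = x := by
        rw [← hpossucc]
        have : N - 1 + 1 = N := by omega
        rw [this, hposN]
      rwa [h2] at h1
    have hcompute : fρ^[2] (pos (M - 1)) = θ (pos (N - 1)) := by
      have s1 : fρ (pos (M - 1)) = pos M := by
        rw [hfstep _ hM1]
        congr 1
        omega
      have s2 : fρ (pos M) = θ (pos (N - 1)) := by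
        rw [hfρe _ hMe, hposM, hσσ, hφρθ, hrx]
      show fρ (fρ (pos (M - 1))) = _
      rw [s1, s2]
    have hθN1 : θ (pos (N - 1)) ∉ e := fun hh => hN1 ((heθ _).2 hh)
    have hconn := conn (pos (M - 1)) hM1 2 (by rw [hcompute]; exact hθN1)
    have heq : (⟨fρ^[2] (pos (M - 1)), by rw [hcompute]; exact hθN1⟩ : {f : F // f ∉ e}) =
        ⟨θ (pos (N - 1)), hθN1⟩ := Subtype.ext hcompute
    rw [heq] at hconn
    exact orbSet_trans (orbSet_symm (θlink (pos (N - 1)) hN1 hθN1)) hconn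
  have mix : ∀ k l (h1 : 1 ≤ k) (hkM : k < M) (hMl : M < l) (hlN : l < N),
      (⟨pos k, nonE k (by omega) (by omega) (by omega)⟩ : {f : F // f ∉ e}) ∈
        orbSet {θ₀, φ₀} ⟨pos l, nonE l (by omega) (by omega) (by omega)⟩ := by
    intro k l h1 hkM hMl hlN
    have r1 := arc1 k (M - 1) h1 (by omega) (by omega)
    have r2 := cross (by omega) (by omega)
    have r3 := arc2 l (N - 1) (by omega) (by omega) (by omega)
    exact orbSet_trans (orbSet_trans (orbSet_symm r1) (orbSet_symm r2)) r3
  have allA : ∀ k l (hk1 : 1 ≤ k) (hkN : k < N) (hkM : k ≠ M)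
      (hl1 : 1 ≤ l) (hlN : l < N) (hlM : l ≠ M),
      (⟨pos k, nonE k hk1 hkN hkM⟩ : {f : F // f ∉ e}) ∈
        orbSet {θ₀, φ₀} ⟨pos l, nonE l hl1 hlN hlM⟩ := by
    intro k l hk1 hkN hkM hl1 hlN hlM
    rcases lt_or_gt_of_ne hkM with hk | hk <;> rcases lt_or_gt_of_ne hlM with hl | hl
    · rcases le_total k l with hkl | hkl
      · exact orbSet_symm (arc1 k l hk1 hkl hl)
      · exact arc1 l k hl1 hkl hk
    · exact mix k l hk1 hk hl hlN
    · exact orbSet_symm (mix l k hl1 hl hk hkN)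
    · rcases le_total k l with hkl | hkl
      · exact orbSet_symm (arc2 k l (by omega) hkl hlN)
      · exact arc2 l k (by omega) hkl hkN
  -- ===== decomposition of the face =====
  have hθinv : θ⁻¹ = θ := inv_eq_of_mul_eq_one_right hθ2
  have hconjθ : ∀ t : ℤ, θ * ρ ^ t * θ = ρ ^ (-t) := by
    intro t
    have h1 : θ * ρ * θ⁻¹ = ρ⁻¹ := by
      rw [hθinv, hρdef, mul_inv_rev]
      rw [show φ'⁻¹ = φ' from inv_eq_of_mul_eq_one_right hφ2, hθinv]
      rw [← mul_assoc θ φ' θ, mul_assoc (θ * φ') θ θ, hθ2, mul_one]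
    calc θ * ρ ^ t * θ = θ * ρ ^ t * θ⁻¹ := by rw [hθinv]
      _ = (θ * ρ * θ⁻¹) ^ t := (conj_zpow).symm
      _ = (ρ⁻¹) ^ t := by rw [h1]
      _ = ρ ^ (-t) := inv_zpow' _ t
  have decomp : ∀ w ∈ orbSet {θ, φ'} x, (∃ n, w = pos n) ∨ (∃ n, θ w = pos n) := by
    intro w hw
    rcases mem_orbSet_iff.1 hw with ⟨g, hg, rfl⟩
    obtain ⟨t, ht | ht⟩ := dih hθ2 hφ2 g hg
    · left
      obtain ⟨n, hn⟩ := zpow_apply_iterate (φ' * θ) t x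
      exact ⟨n, by rw [ht, ← hρdef]; exact hn⟩
    · right
      obtain ⟨n, hn⟩ := zpow_apply_iterate ρ (-t) x
      refine ⟨n, ?_⟩
      have h1 : θ (g x) = (θ * g) x := rfl
      rw [h1, ht, ← hρdef, ← mul_assoc, hconjθ t]
      exact hn
  have hθxe : θ x ∈ e := by
    rw [heenum]; exact Set.mem_insert_of_mem _ (Set.mem_insert _ _)
  have hσxe : σ' x ∈ e := by
    rw [heenum]; exact Set.mem_insert_of_mem _ (Set.mem_insert_of_mem _ (Set.mem_insert _ _))
  have hθσxe : θ (σ' x) ∈ e := by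
    rw [heenum]
    exact Set.mem_insert_of_mem _ (Set.mem_insert_of_mem _ (Set.mem_insert_of_mem _ rfl))
  have norm : ∀ (w : F) (hw : w ∉ e), w ∈ orbSet {θ, φ'} x →
      ∃ (k : ℕ) (h1 : 1 ≤ k) (h2 : k < N) (h3 : k ≠ M),
        (⟨pos k, nonE k h1 h2 h3⟩ : {f : F // f ∉ e}) ∈ orbSet {θ₀, φ₀} ⟨w, hw⟩ := by
    intro w hw hwf
    rcases decomp w hwf with ⟨n, hn⟩ | ⟨n, hn⟩
    · have hpk : pos (n % N) = w := by rw [hposmod, ← hn]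
      have hk2 : n % N < N := Nat.mod_lt _ hNpos
      have hk0 : n % N ≠ 0 := by
        intro hz
        rw [hz, hpos0] at hpk
        exact hw (hpk ▸ hxe)
      have hkM : n % N ≠ M := by
        intro hz
        rw [hz, hposM] at hpk
        exact hw (hpk ▸ hσxe)
      refine ⟨n % N, by omega, hk2, hkM, ?_⟩
      have heq : (⟨pos (n % N), nonE _ (by omega) hk2 hkM⟩ : {f : F // f ∉ e}) = ⟨w, hw⟩ :=
        Subtype.ext hpk
      rw [heq]
      exact orbSet_refl _
    · have hθw : θ w ∉ e := fun hh => hw ((heθ w).2 hh)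
      have hpk : pos (n % N) = θ w := by rw [hposmod, ← hn]
      have hk2 : n % N < N := Nat.mod_lt _ hNpos
      have hk0 : n % N ≠ 0 := by
        intro hz
        rw [hz, hpos0] at hpk
        have : w = θ x := by rw [← hθθ w, ← hpk]
        exact hw (this ▸ hθxe)
      have hkM : n % N ≠ M := by
        intro hz
        rw [hz, hposM] at hpk
        have : w = θ (σ' x) := by rw [← hθθ w, ← hpk]
        exact hw (this ▸ hθσxe)
      refine ⟨n % N, by omega, hk2, hkM, ?_⟩
      have heq : (⟨pos (n % N), nonE _ (by omega) hk2 hkM⟩ : {f : F // f ∉ e}) = ⟨θ w, hθw⟩ :=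
        Subtype.ext hpk
      rw [heq]
      exact θlink w hw hθw
  have femain : ∀ (u v : F) (hu : u ∉ e) (hv : v ∉ e),
      u ∈ orbSet {θ, φ'} x → v ∈ orbSet {θ, φ'} x →
      (⟨u, hu⟩ : {f : F // f ∉ e}) ∈ orbSet {θ₀, φ₀} ⟨v, hv⟩ := by
    intro u v hu hv huf hvf
    obtain ⟨ku, hu1, hu2, hu3, hru⟩ := norm u hu huf
    obtain ⟨kv, hv1, hv2, hv3, hrv⟩ := norm v hv hvf
    exact orbSet_trans (orbSet_trans (orbSet_symm hru) (allA ku kv hu1 hu2 hu3 hv1 hv2 hv3)) hrv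
  -- ===== vertex count =====
  have hσ₀memV : σ₀ ∈ ({σ₀, φ₀} : Set (Perm {f : F // f ∉ e})) := Set.mem_insert _ _
  have hφ₀memV : φ₀ ∈ ({σ₀, φ₀} : Set (Perm {f : F // f ∉ e})) := Set.mem_insert_of_mem _ rfl
  set τv : Equiv.Perm {f : F // f ∉ e} := φ₀ * σ₀ with hτvdef
  have hτvmem : τv ∈ Subgroup.closure ({σ₀, φ₀} : Set (Perm {f : F // f ∉ e})) :=
    mul_mem (Subgroup.subset_closure hφ₀memV) (Subgroup.subset_closure hσ₀memV)
  have τv_spec : ∀ a : {f : F // f ∉ e}, ∃ k, 0 < k ∧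
      ((τv a : F) = (⇑(φ' * σ'))^[k] (a : F)) ∧
      ∀ i, 0 < i → i < k → (⇑(φ' * σ'))^[i] (a : F) ∈ e := by
    intro a
    obtain ⟨m', hm'1, hm'2, hm'3⟩ := hdel2 (σ₀ a)
    have hσa : ((σ₀ a : F)) = σ' (a : F) := (hdel1 a).2
    have hchain : ∀ j, (⇑(φ' * σ'))^[j + 1] (a : F) = ((φ' * σ') ^ j) (φ' ((σ₀ a : F))) := by
      intro j
      have h1 : (⇑(φ' * σ'))^[j + 1] (a : F) = (⇑(φ' * σ'))^[j] ((φ' * σ') (a : F)) :=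
        Function.iterate_succ_apply _ _ _
      rw [h1]
      have h2 : (φ' * σ') (a : F) = φ' ((σ₀ a : F)) := by
        rw [hσa]; rfl
      rw [h2]
      rfl
    refine ⟨m' + 1, Nat.succ_pos _, ?_, ?_⟩
    · have h1 : τv a = φ₀ (σ₀ a) := rfl
      rw [h1, hm'3, hchain m']
    · intro i hi0 hik
      obtain ⟨j, rfl⟩ : ∃ j, i = j + 1 := ⟨i - 1, by omega⟩
      rw [hchain j]
      exact hm'2 j (by omega)
  have downV : ∀ a b : {f : F // f ∉ e}, a ∈ orbSet {σ₀, φ₀} b →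
      (a : F) ∈ orbSet {σ', φ'} (b : F) := by
    intro a b hab
    rcases mem_orbSet_iff.1 hab with ⟨g, hg, rfl⟩
    refine rel_closure (r := fun a b : {f : F // f ∉ e} => (a : F) ∈ orbSet {σ', φ'} (b : F))
      ⟨fun a => orbSet_refl _, fun h => orbSet_symm h, fun h1 h2 => orbSet_trans h1 h2⟩
      ?_ g hg b
    intro s hs a
    rcases hs with rfl | rfl
    · rw [(hdel1 a).2]
      exact orbSet_gen hσmemV _
    · obtain ⟨m', hm'1, hm'2, hm'3⟩ := hdel2 a
      rw [hm'3]
      have : ((φ' * σ') ^ m') (φ' (a : F)) = (((φ' * σ') ^ m') * φ') (a : F) := rfl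
      rw [this]
      exact orbSet_apply_mem (mul_mem (pow_mem (mul_mem (Subgroup.subset_closure hφmemV)
        (Subgroup.subset_closure hσmemV)) m') (Subgroup.subset_closure hφmemV)) _
  have upV : ∀ a b : {f : F // f ∉ e}, (a : F) ∈ orbSet {σ', φ'} (b : F) →
      a ∈ orbSet {σ₀, φ₀} b := by
    intro a b hab
    rcases mem_orbSet_iff.1 hab with ⟨g, hg, hgb⟩
    obtain ⟨t, ht | ht⟩ := dih hσ2 hφ2 g hg
    · obtain ⟨n, hn⟩ := zpow_apply_iterate (φ' * σ') t ((b : F))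
      have hav : (a : F) = (⇑(φ' * σ'))^[n] ((b : F)) := by
        rw [← hn, ← ht, hgb]
      have hne : (⇑(φ' * σ'))^[n] ((b : F)) ∉ e := hav ▸ a.2
      obtain ⟨j, hj⟩ := FR (⇑(φ' * σ')) τv τv_spec n b hne
      have : (τv ^ j) b = a := Subtype.ext (by rw [hj, ← hav])
      rw [← this]
      exact orbSet_apply_mem (pow_mem hτvmem j) _
    · have hσb : ((σ₀ b : F)) = σ' (b : F) := (hdel1 b).2
      obtain ⟨n, hn⟩ := zpow_apply_iterate (φ' * σ') t ((σ₀ b : F))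
      have hav : (a : F) = (⇑(φ' * σ'))^[n] ((σ₀ b : F)) := by
        rw [← hn, hσb, ← hgb, ht]
        rfl
      have hne : (⇑(φ' * σ'))^[n] ((σ₀ b : F)) ∉ e := hav ▸ a.2
      obtain ⟨j, hj⟩ := FR (⇑(φ' * σ')) τv τv_spec n (σ₀ b) hne
      have : (τv ^ j) (σ₀ b) = a := Subtype.ext (by rw [hj, ← hav])
      rw [← this]
      exact orbSet_trans (orbSet_apply_mem (pow_mem hτvmem j) _) (orbSet_gen hσ₀memV b)
  have ontoV : ∀ y : F, ∃ a : {f : F // f ∉ e}, y ∈ orbSet {σ', φ'} (a : F) := by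
    intro y
    by_cases hy : y ∈ e
    · obtain ⟨u, hu1, hu2⟩ := Set.not_subset.1 (hverts y hy)
      exact ⟨⟨u, hu2⟩, orbSet_symm hu1⟩
    · exact ⟨⟨y, hy⟩, orbSet_refl _⟩
  have cV : orbCount {σ', φ'} = orbCount {σ₀, φ₀} := countA downV upV ontoV
  -- ===== face count =====
  have downF : ∀ a b : {f : F // f ∉ e}, a ∈ orbSet {θ₀, φ₀} b →
      (a : F) ∈ orbSet {θ, φ'} (b : F) := by
    intro a b hab
    rcases mem_orbSet_iff.1 hab with ⟨g, hg, rfl⟩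
    refine rel_closure (r := fun a b : {f : F // f ∉ e} => (a : F) ∈ orbSet {θ, φ'} (b : F))
      ⟨fun a => orbSet_refl _, fun h => orbSet_symm h, fun h1 h2 => orbSet_trans h1 h2⟩
      ?_ g hg b
    intro s hs a
    rcases hs with rfl | rfl
    · rw [(hdel1 a).1]
      exact orbSet_gen hθmemF _
    · obtain ⟨m', hm'1, hm'2, hm'3⟩ := hdel2 a
      rcases Nat.eq_zero_or_pos m' with rfl | hm'pos
      · rw [hm'3]
        simp only [pow_zero, Equiv.Perm.one_apply]
        exact orbSet_gen hφmemF _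
      · have hfe : φ' (a : F) ∈ e := by
          have := hm'2 0 hm'pos
          simpa using this
        have haf : (a : F) ∈ orbSet {θ, φ'} x := by
          have h1 : (a : F) = φ' (φ' (a : F)) := (hφφ _).symm
          rw [h1]
          exact facegenφ _ (efc hfe)
        exact orbSet_trans (φface a hfe) (orbSet_symm haf)
  have upF : ∀ a b : {f : F // f ∉ e}, (a : F) ∈ orbSet {θ, φ'} (b : F) →
      a ∈ orbSet {θ₀, φ₀} b := by
    intro a b hab
    by_cases hbf : (b : F) ∈ orbSet {θ, φ'} x
    · exact femain _ _ a.2 b.2 (orbSet_trans hab hbf) hbf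
    · have havoid : ∀ w, w ∈ orbSet {θ, φ'} (b : F) → w ∉ e := by
        intro w hw hwe
        apply hbf
        have h1 : (b : F) ∈ orbSet {θ, φ'} w := orbSet_symm hw
        rwa [hfaceeq w hwe] at h1
      rcases mem_orbSet_iff.1 hab with ⟨g, hg, hgb⟩
      obtain ⟨t, ht | ht⟩ := dih hθ2 hφ2 g hg
      · -- a = ρ^t b
        obtain ⟨n, hn⟩ := zpow_apply_iterate (φ' * θ) t ((b : F))
        have hav : (a : F) = (⇑ρ)^[n] ((b : F)) := by
          rw [← hgb, ht]
          exact hn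
        have hiter : ∀ n', (⇑ρ)^[n'] ((b : F)) ∈ orbSet {θ, φ'} (b : F) ∧
            fρ^[n'] ((b : F)) = (⇑ρ)^[n'] ((b : F)) := by
          intro n'
          induction n' with
          | zero => exact ⟨orbSet_refl _, rfl⟩
          | succ n' ih =>
            constructor
            · rw [Function.iterate_succ_apply']
              exact orbSet_trans (orbSet_apply_mem (mul_mem
                (Subgroup.subset_closure hφmemF) (Subgroup.subset_closure hθmemF)) _) ih.1
            · rw [Function.iterate_succ_apply', Function.iterate_succ_apply', ih.2,
                hfρn _ (havoid _ ih.1)]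
        have hne : fρ^[n] ((b : F)) ∉ e := by
          rw [(hiter n).2, ← hav]
          exact a.2
        obtain ⟨j, hj⟩ := FR fρ τf τf_spec n b hne
        have heq : (τf ^ j) b = a := Subtype.ext (by rw [hj, (hiter n).2, ← hav])
        rw [← heq]
        exact orbSet_apply_mem (pow_mem hτfmem j) _
      · -- a = ρ^t (θ b)
        have hθb : ((θ₀ b : F)) = θ (b : F) := (hdel1 b).1
        obtain ⟨n, hn⟩ := zpow_apply_iterate (φ' * θ) t ((θ₀ b : F))
        have hav : (a : F) = (⇑ρ)^[n] ((θ₀ b : F)) := by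
          rw [← hn, hθb, ← hgb, ht]
          rfl
        have hθbo : ((θ₀ b : F)) ∈ orbSet {θ, φ'} (b : F) := by
          rw [hθb]
          exact orbSet_gen hθmemF _
        have hiter : ∀ n', (⇑ρ)^[n'] ((θ₀ b : F)) ∈ orbSet {θ, φ'} (b : F) ∧
            fρ^[n'] ((θ₀ b : F)) = (⇑ρ)^[n'] ((θ₀ b : F)) := by
          intro n'
          induction n' with
          | zero => exact ⟨hθbo, rfl⟩
          | succ n' ih =>
            constructor
            · rw [Function.iterate_succ_apply']
              exact orbSet_trans (orbSet_apply_mem (mul_mem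
                (Subgroup.subset_closure hφmemF) (Subgroup.subset_closure hθmemF)) _) ih.1
            · rw [Function.iterate_succ_apply', Function.iterate_succ_apply', ih.2,
                hfρn _ (havoid _ ih.1)]
        have hne : fρ^[n] ((θ₀ b : F)) ∉ e := by
          rw [(hiter n).2, ← hav]
          exact a.2
        obtain ⟨j, hj⟩ := FR fρ τf τf_spec n (θ₀ b) hne
        have heq : (τf ^ j) (θ₀ b) = a := Subtype.ext (by rw [hj, (hiter n).2, ← hav])
        rw [← heq]
        exact orbSet_trans (orbSet_apply_mem (pow_mem hτfmem j) _) (orbSet_gen hθ₀memF b)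
  have ontoF : ∀ y : F, ∃ a : {f : F // f ∉ e}, y ∈ orbSet {θ, φ'} (a : F) := by
    intro y
    by_cases hy : y ∈ e
    · obtain ⟨u, huf, hue⟩ := feNE
      exact ⟨⟨u, hue⟩, orbSet_trans (efc hy) (orbSet_symm huf)⟩
    · exact ⟨⟨y, hy⟩, orbSet_refl _⟩
  have cF : orbCount {θ, φ'} = orbCount {θ₀, φ₀} := countA downF upF ontoF
  -- ===== component count =====
  have hθmemC : θ ∈ ({θ, σ', φ'} : Set (Perm F)) := Set.mem_insert _ _
  have hσmemC : σ' ∈ ({θ, σ', φ'} : Set (Perm F)) :=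
    Set.mem_insert_of_mem _ (Set.mem_insert _ _)
  have hφmemC : φ' ∈ ({θ, σ', φ'} : Set (Perm F)) :=
    Set.mem_insert_of_mem _ (Set.mem_insert_of_mem _ rfl)
  have hθ₀memC : θ₀ ∈ ({θ₀, σ₀, φ₀} : Set (Perm {f : F // f ∉ e})) := Set.mem_insert _ _
  have hσ₀memC : σ₀ ∈ ({θ₀, σ₀, φ₀} : Set (Perm {f : F // f ∉ e})) :=
    Set.mem_insert_of_mem _ (Set.mem_insert _ _)
  have hφ₀memC : φ₀ ∈ ({θ₀, σ₀, φ₀} : Set (Perm {f : F // f ∉ e})) :=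
    Set.mem_insert_of_mem _ (Set.mem_insert_of_mem _ rfl)
  have hmonoF : ({θ₀, φ₀} : Set (Perm {f : F // f ∉ e})) ⊆ {θ₀, σ₀, φ₀} := by
    intro z hz
    rcases hz with rfl | rfl
    · exact hθ₀memC
    · exact hφ₀memC
  have downC : ∀ a b : {f : F // f ∉ e}, a ∈ orbSet {θ₀, σ₀, φ₀} b →
      (a : F) ∈ orbSet {θ, σ', φ'} (b : F) := by
    intro a b hab
    rcases mem_orbSet_iff.1 hab with ⟨g, hg, rfl⟩
    refine rel_closure (r := fun a b : {f : F // f ∉ e} => (a : F) ∈ orbSet {θ, σ', φ'} (b : F))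
      ⟨fun a => orbSet_refl _, fun h => orbSet_symm h, fun h1 h2 => orbSet_trans h1 h2⟩
      ?_ g hg b
    intro s hs a
    rcases hs with rfl | rfl | rfl
    · rw [(hdel1 a).1]
      exact orbSet_gen hθmemC _
    · rw [(hdel1 a).2]
      exact orbSet_gen hσmemC _
    · obtain ⟨m', hm'1, hm'2, hm'3⟩ := hdel2 a
      rw [hm'3]
      have h1 : ((φ' * σ') ^ m') (φ' (a : F)) = (((φ' * σ') ^ m') * φ') (a : F) := rfl
      rw [h1]
      exact orbSet_apply_mem (mul_mem (pow_mem (mul_mem (Subgroup.subset_closure hφmemC)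
        (Subgroup.subset_closure hσmemC)) m') (Subgroup.subset_closure hφmemC)) _
  obtain ⟨u₀, hu₀f, hu₀e⟩ := feNE
  have upC : ∀ a b : {f : F // f ∉ e}, (a : F) ∈ orbSet {θ, σ', φ'} (b : F) →
      a ∈ orbSet {θ₀, σ₀, φ₀} b := by
    have mkeq : ∀ a b : {f : F // f ∉ e}, a ∈ orbSet {θ₀, σ₀, φ₀} b →
        (Quotient.mk'' a : MulAction.orbitRel.Quotient
          (Subgroup.closure ({θ₀, σ₀, φ₀} : Set (Perm {f : F // f ∉ e}))) {f : F // f ∉ e}) =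
          Quotient.mk'' b :=
      fun a b hab => Quotient.sound' (MulAction.orbitRel_apply.2 hab)
    set Q : F → MulAction.orbitRel.Quotient
        (Subgroup.closure ({θ₀, σ₀, φ₀} : Set (Perm {f : F // f ∉ e}))) {f : F // f ∉ e} :=
      fun y => if h : y ∈ e then Quotient.mk'' (⟨u₀, hu₀e⟩ : {f : F // f ∉ e})
        else Quotient.mk'' ⟨y, h⟩ with hQdef
    have femainC : ∀ (w : F) (hw : w ∉ e), w ∈ orbSet {θ, φ'} x →
        (Quotient.mk'' (⟨w, hw⟩ : {f : F // f ∉ e}) : MulAction.orbitRel.Quotient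
          (Subgroup.closure ({θ₀, σ₀, φ₀} : Set (Perm {f : F // f ∉ e}))) {f : F // f ∉ e}) =
          Quotient.mk'' (⟨u₀, hu₀e⟩ : {f : F // f ∉ e}) :=
      fun w hw hwf => mkeq _ _ (orbSet_mono hmonoF (femain w u₀ hw hu₀e hwf hu₀f))
    have ηgen : ∀ s ∈ ({θ, σ', φ'} : Set (Perm F)), ∀ y, Q (s y) = Q y := by
      intro s hs y
      obtain h | h | h := hs <;> rw [h]
      · by_cases hy : y ∈ e
        · simp only [hQdef]
          rw [dif_pos hy, dif_pos ((heθ y).1 hy)]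
        · have hθy : θ y ∉ e := fun hh => hy ((heθ y).2 hh)
          simp only [hQdef]
          rw [dif_neg hy, dif_neg hθy]
          refine mkeq _ _ ?_
          have heq : θ₀ ⟨y, hy⟩ = ⟨θ y, hθy⟩ := Subtype.ext ((hdel1 ⟨y, hy⟩).1)
          rw [← heq]
          exact orbSet_gen hθ₀memC _
      · by_cases hy : y ∈ e
        · simp only [hQdef]
          rw [dif_pos hy, dif_pos ((heσ y).1 hy)]
        · have hσy : σ' y ∉ e := fun hh => hy ((heσ y).2 hh)
          simp only [hQdef]
          rw [dif_neg hy, dif_neg hσy]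
          refine mkeq _ _ ?_
          have heq : σ₀ ⟨y, hy⟩ = ⟨σ' y, hσy⟩ := Subtype.ext ((hdel1 ⟨y, hy⟩).2)
          rw [← heq]
          exact orbSet_gen hσ₀memC _
      · by_cases hy : y ∈ e <;> by_cases hfy : φ' y ∈ e
        · simp only [hQdef]
          rw [dif_pos hy, dif_pos hfy]
        · simp only [hQdef]
          rw [dif_pos hy, dif_neg hfy]
          exact femainC (φ' y) hfy (facegenφ _ (efc hy))
        · -- y ∉ e, φ' y ∈ e
          simp only [hQdef]
          rw [dif_neg hy, dif_pos hfy]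
          have h1 : (Quotient.mk'' (φ₀ ⟨y, hy⟩) : MulAction.orbitRel.Quotient
              (Subgroup.closure ({θ₀, σ₀, φ₀} : Set (Perm {f : F // f ∉ e}))) {f : F // f ∉ e}) =
              Quotient.mk'' (⟨y, hy⟩ : {f : F // f ∉ e}) :=
            mkeq _ _ (orbSet_gen hφ₀memC _)
          have h2 := femainC ((φ₀ ⟨y, hy⟩ : F)) (φ₀ ⟨y, hy⟩).2 (φface ⟨y, hy⟩ hfy)
          rw [← h1, ← h2]
        · -- y ∉ e, φ' y ∉ e
          simp only [hQdef]
          rw [dif_neg hy, dif_neg hfy]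
          refine mkeq _ _ ?_
          obtain ⟨m', hm'1, hm'2, hm'3⟩ := hdel2 ⟨y, hy⟩
          have hm'0 : m' = 0 := by
            by_contra hm'pos
            exact hfy (by simpa using hm'2 0 (by omega))
          have heq : φ₀ ⟨y, hy⟩ = ⟨φ' y, hfy⟩ := by
            apply Subtype.ext
            rw [hm'3, hm'0]
            simp
          rw [← heq]
          exact orbSet_gen hφ₀memC _
    have ηconst := rel_closure (r := fun y y' => Q y = Q y')
      ⟨fun _ => rfl, Eq.symm, Eq.trans⟩ ηgen
    intro a b hab
    rcases mem_orbSet_iff.1 hab with ⟨g, hg, hgb⟩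
    have h1 := ηconst g hg (b : F)
    rw [hgb] at h1
    simp only [hQdef] at h1
    rw [dif_neg a.2, dif_neg b.2] at h1
    exact MulAction.orbitRel_apply.1 (Quotient.eq''.1 h1)
  have ontoC : ∀ y : F, ∃ a : {f : F // f ∉ e}, y ∈ orbSet {θ, σ', φ'} (a : F) := by
    have hmonoVC : ({σ', φ'} : Set (Perm F)) ⊆ {θ, σ', φ'} := by
      intro z hz
      rcases hz with rfl | rfl
      · exact hσmemC
      · exact hφmemC
    intro y
    by_cases hy : y ∈ e
    · obtain ⟨u, hu1, hu2⟩ := Set.not_subset.1 (hverts y hy)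
      exact ⟨⟨u, hu2⟩, orbSet_mono hmonoVC (orbSet_symm hu1)⟩
    · exact ⟨⟨y, hy⟩, orbSet_refl _⟩
  have cC : orbCount {θ, σ', φ'} = orbCount {θ₀, σ₀, φ₀} := countA downC upC ontoC
  -- ===== edge count =====
  have hθ₀memE : θ₀ ∈ ({θ₀, σ₀} : Set (Perm {f : F // f ∉ e})) := Set.mem_insert _ _
  have hσ₀memE : σ₀ ∈ ({θ₀, σ₀} : Set (Perm {f : F // f ∉ e})) := Set.mem_insert_of_mem _ rfl
  have downE : ∀ a b : {f : F // f ∉ e}, a ∈ orbSet {θ₀, σ₀} b →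
      (a : F) ∈ orbSet {θ, σ'} (b : F) := by
    intro a b hab
    rcases mem_orbSet_iff.1 hab with ⟨g, hg, rfl⟩
    refine rel_closure (r := fun a b : {f : F // f ∉ e} => (a : F) ∈ orbSet {θ, σ'} (b : F))
      ⟨fun a => orbSet_refl _, fun h => orbSet_symm h, fun h1 h2 => orbSet_trans h1 h2⟩
      ?_ g hg b
    intro s hs a
    obtain hh | hh := hs <;> rw [hh]
    · rw [(hdel1 a).1]
      exact orbSet_gen hθmemE _
    · rw [(hdel1 a).2]
      exact orbSet_gen hσmemE _
  have upE : ∀ a b : {f : F // f ∉ e}, (a : F) ∈ orbSet {θ, σ'} (b : F) →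
      a ∈ orbSet {θ₀, σ₀} b := by
    have hrel := rel_closure (S := ({θ, σ'} : Set (Perm F))) (r := fun y y' : F => (y ∈ e ∧ y' ∈ e) ∨
        ∃ (hy : y ∉ e) (hy' : y' ∉ e),
          (⟨y, hy⟩ : {f : F // f ∉ e}) ∈ orbSet {θ₀, σ₀} ⟨y', hy'⟩)
      ?_ ?_
    · intro a b hab
      rcases mem_orbSet_iff.1 hab with ⟨g, hg, hgb⟩
      have h1 := hrel g hg (b : F)
      rw [hgb] at h1
      rcases h1 with ⟨h1, _⟩ | ⟨h1, h2, h3⟩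
      · exact absurd h1 a.2
      · exact h3
    · constructor
      · intro y
        by_cases hy : y ∈ e
        · exact Or.inl ⟨hy, hy⟩
        · exact Or.inr ⟨hy, hy, orbSet_refl _⟩
      · intro y y' hr
        rcases hr with ⟨h1, h2⟩ | ⟨h1, h2, h3⟩
        · exact Or.inl ⟨h2, h1⟩
        · exact Or.inr ⟨h2, h1, orbSet_symm h3⟩
      · intro y y' y'' hr hr'
        rcases hr with ⟨h1, h2⟩ | ⟨h1, h2, h3⟩
        · rcases hr' with ⟨h1', h2'⟩ | ⟨h1', h2', h3'⟩
          · exact Or.inl ⟨h1, h2'⟩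
          · exact absurd h2 h1'
        · rcases hr' with ⟨h1', h2'⟩ | ⟨h1', h2', h3'⟩
          · exact absurd h1' h2
          · exact Or.inr ⟨h1, h2', orbSet_trans h3 h3'⟩
    · intro s hs y
      obtain hh | hh := hs <;> rw [hh]
      · by_cases hy : y ∈ e
        · exact Or.inl ⟨(heθ y).1 hy, hy⟩
        · have hθy : θ y ∉ e := fun hh2 => hy ((heθ y).2 hh2)
          refine Or.inr ⟨hθy, hy, ?_⟩
          have heq : θ₀ ⟨y, hy⟩ = ⟨θ y, hθy⟩ := Subtype.ext ((hdel1 ⟨y, hy⟩).1)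
          rw [← heq]
          exact orbSet_gen hθ₀memE _
      · by_cases hy : y ∈ e
        · exact Or.inl ⟨(heσ y).1 hy, hy⟩
        · have hσy : σ' y ∉ e := fun hh2 => hy ((heσ y).2 hh2)
          refine Or.inr ⟨hσy, hy, ?_⟩
          have heq : σ₀ ⟨y, hy⟩ = ⟨σ' y, hσy⟩ := Subtype.ext ((hdel1 ⟨y, hy⟩).2)
          rw [← heq]
          exact orbSet_gen hσ₀memE _
  have heeE : ∀ y ∈ e, y ∈ orbSet {θ, σ'} x := by
    intro y hy
    rwa [he] at hy
  have hsepE : ∀ y ∈ e, ∀ a : {f : F // f ∉ e}, ¬ ((a : F) ∈ orbSet {θ, σ'} y) := by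
    intro y hy a hmem
    have h1 : y ∈ orbSet {θ, σ'} x := by rwa [he] at hy
    have h2 : (a : F) ∈ orbSet {θ, σ'} x := orbSet_trans hmem h1
    rw [← he] at h2
    exact a.2 h2
  have cE : orbCount {θ, σ'} = orbCount {θ₀, σ₀} + 1 := countB hxe downE upE heeE hsepE
  -- ===== conclusion =====
  rw [genus, genus, cE, cV, cF, cC]
  push_cast
  ring
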